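/- Let V be a finite nonempty type and for each n ≥ 1 let L_n be a linear operator on functions V^n → ℝ such that (i) L_n commutes with every permutation operator T_σ, where (T_σ g)(x_1,…,x_n) := g(x_{σ(1)},…,x_{σ(n)}) for σ a permutation of {1,…,n}, and (ii) for every n ≥ 2 and every permutation-invariant g : V^{n−1} → ℝ, L_n(Π^{(n)}g) = Π^{(n)}(L_{n−1}g), where (Π^{(n)}g)(x_1,…,x_n) := Σ_{i=1}^n g(x_1,…,x_{i−1},x_{i+1},…,x_n). For each n let μ_n : V^n → ℝ be nonnegative weights summing to 1 that are permutation-invariant (μ_n(x∘σ) = μ_n(x)) and consistent: Σ_{y ∈ V} μ_n(x_1,…,x_{n−1},y) = μ_{n−1}(x_1,…,x_{n−1}). Then for every n ≥ 2, every t ≥ 0 and every permutation-invariant g : V^{n−1} → ℝ: Σ_{x ∈ V^n} μ_n(x) · (exp(t·L_n)(π_n g))(x) = Σ_{x ∈ V^{n−1}} μ_{n−1}(x) · (exp(t·L_{n−1})g)(x), where (π_n g)(x_1,…,x_n) := g(x_1,…,x_{n−1}) and exp denotes the operator exponential on the finite-dimensional space of functions. -/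

import Mathlib

/-- Operator exponential `exp(t L)` on the finite-dimensional space of functions. -/
noncomputable def expOp {Ω : Type*} [Fintype Ω] (t : ℝ) (L : (Ω → ℝ) →ₗ[ℝ] (Ω → ℝ)) :
    (Ω → ℝ) →L[ℝ] (Ω → ℝ) :=
  NormedSpace.exp (t • (LinearMap.toContinuousLinearMap L))

noncomputable def compCLM {Ω Ω' : Type*} [Fintype Ω] [Fintype Ω'] (f : Ω' → Ω) :
    ((Ω → ℝ) →L[ℝ] (Ω' → ℝ)) :=
  LinearMap.toContinuousLinearMap
    { toFun := fun g => g ∘ f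
      map_add' := fun _ _ => rfl
      map_smul' := fun _ _ => rfl }

@[simp] lemma compCLM_apply {Ω Ω' : Type*} [Fintype Ω] [Fintype Ω'] (f : Ω' → Ω)
    (g : Ω → ℝ) (x : Ω') : compCLM f g x = g (f x) := rfl

lemma exp_apply_tsum {Ω : Type*} [Fintype Ω] (A : (Ω → ℝ) →L[ℝ] (Ω → ℝ)) (g : Ω → ℝ) :
    NormedSpace.exp A g = ∑' (k : ℕ), ((k : ℕ).factorial : ℝ)⁻¹ • ((A ^ k) g) := by
  have hs := NormedSpace.expSeries_summable' (𝕂 := ℝ) A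
  have h1 : NormedSpace.exp A = ∑' (k : ℕ), ((k : ℕ).factorial : ℝ)⁻¹ • A ^ k := by
    rw [NormedSpace.exp_eq_tsum ℝ]
  have h2 := (ContinuousLinearMap.apply ℝ (Ω → ℝ) g).map_tsum hs
  rw [h1]
  simpa using h2

lemma exp_series_apply_summable {Ω : Type*} [Fintype Ω] (A : (Ω → ℝ) →L[ℝ] (Ω → ℝ))
    (g : Ω → ℝ) : Summable fun k : ℕ => ((k : ℕ).factorial : ℝ)⁻¹ • ((A ^ k) g) := by
  have hs := NormedSpace.expSeries_summable' (𝕂 := ℝ) A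
  have := hs.mapL (ContinuousLinearMap.apply ℝ (Ω → ℝ) g)
  simpa using this

lemma exp_comm_apply {Ω : Type*} [Fintype Ω] (A T : (Ω → ℝ) →L[ℝ] (Ω → ℝ))
    (h : A * T = T * A) (g : Ω → ℝ) :
    NormedSpace.exp A (T g) = T (NormedSpace.exp A g) := by
  have hc : Commute (NormedSpace.exp A) T := Commute.exp_left h
  have := DFunLike.congr_fun hc g
  simpa [ContinuousLinearMap.mul_apply] using this

lemma sum_precomp {V : Type*} [Fintype V] {m : ℕ} (σ : Equiv.Perm (Fin m))
    (F : (Fin m → V) → ℝ) :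
    ∑ x : Fin m → V, F (x ∘ σ) = ∑ x : Fin m → V, F x := by
  have hb : Function.Bijective (fun x : Fin m → V => x ∘ σ) := by
    apply Function.bijective_iff_has_inverse.mpr
    refine ⟨fun x => x ∘ σ.symm, fun x => funext fun j => ?_, fun x => funext fun j => ?_⟩
    · simp [Function.comp]
    · simp [Function.comp]
  exact Fintype.sum_bijective _ hb _ _ (fun x => rfl)

theorem stmt3 {V : Type*} [Fintype V] [Nonempty V]
    (L : ∀ n : ℕ, ((Fin n → V) → ℝ) →ₗ[ℝ] ((Fin n → V) → ℝ))
    (hperm : ∀ n : ℕ, 1 ≤ n → ∀ σ : Equiv.Perm (Fin n), ∀ g : (Fin n → V) → ℝ,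
        L n (fun x => g (x ∘ σ)) = fun x => L n g (x ∘ σ))
    (hint : ∀ n : ℕ, ∀ g : (Fin (n + 1) → V) → ℝ,
        (∀ σ : Equiv.Perm (Fin (n + 1)), ∀ x, g (x ∘ σ) = g x) →
        L (n + 2) (fun x => ∑ i : Fin (n + 2), g (x ∘ i.succAbove))
          = fun x => ∑ i : Fin (n + 2), L (n + 1) g (x ∘ i.succAbove))
    (μ : ∀ n : ℕ, (Fin n → V) → ℝ)
    (hnonneg : ∀ n x, 0 ≤ μ n x)
    (hsum : ∀ n : ℕ, 1 ≤ n → ∑ x : Fin n → V, μ n x = 1)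
    (hμperm : ∀ n : ℕ, ∀ σ : Equiv.Perm (Fin n), ∀ x : Fin n → V, μ n (x ∘ σ) = μ n x)
    (hμcons : ∀ n : ℕ, ∀ x : Fin n → V, ∑ y : V, μ (n + 1) (Fin.snoc x y) = μ n x)
    (t : ℝ) (ht : 0 ≤ t)
    (n : ℕ) (g : (Fin (n + 1) → V) → ℝ)
    (hg : ∀ σ : Equiv.Perm (Fin (n + 1)), ∀ x, g (x ∘ σ) = g x) :
    ∑ x : Fin (n + 2) → V,
        μ (n + 2) x * expOp t (L (n + 2)) (fun y => g (Fin.init y)) x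
      = ∑ x : Fin (n + 1) → V, μ (n + 1) x * expOp t (L (n + 1)) g x := by
  classical
  set A₁ : ((Fin (n+1) → V) → ℝ) →L[ℝ] ((Fin (n+1) → V) → ℝ) :=
    t • (LinearMap.toContinuousLinearMap (L (n+1))) with hA₁def
  set A₂ : ((Fin (n+2) → V) → ℝ) →L[ℝ] ((Fin (n+2) → V) → ℝ) :=
    t • (LinearMap.toContinuousLinearMap (L (n+2))) with hA₂def
  set πg : (Fin (n+2) → V) → ℝ := fun y => g (Fin.init y) with hπg
  -- commutation of exp with permutation operators
  have hcomm : ∀ (m : ℕ), 1 ≤ m → ∀ (σ : Equiv.Perm (Fin m)) (h : (Fin m → V) → ℝ)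
      (x : Fin m → V),
      NormedSpace.exp (t • (LinearMap.toContinuousLinearMap (L m)))
          (fun y => h (y ∘ σ)) x
        = NormedSpace.exp (t • (LinearMap.toContinuousLinearMap (L m))) h (x ∘ σ) := by
    intro m hm σ h x
    set T : ((Fin m → V) → ℝ) →L[ℝ] ((Fin m → V) → ℝ) :=
      compCLM (fun y : Fin m → V => y ∘ σ) with hT
    have hmul : (t • (LinearMap.toContinuousLinearMap (L m))) * T
        = T * (t • (LinearMap.toContinuousLinearMap (L m))) := by
      ext u z
      show t * (L m (fun y => u (y ∘ σ))) z = t * (L m u) (z ∘ σ)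
      rw [congrFun (hperm m hm σ u) z]
    have := exp_comm_apply _ T hmul h
    exact congrFun this x
  -- the removal operator as a continuous linear map
  set P : ((Fin (n+1) → V) → ℝ) →L[ℝ] ((Fin (n+2) → V) → ℝ) :=
    ∑ i : Fin (n+2), compCLM (fun x : Fin (n+2) → V => x ∘ i.succAbove) with hPdef
  have hP : ∀ (h : (Fin (n+1) → V) → ℝ) (x : Fin (n+2) → V),
      P h x = ∑ i : Fin (n+2), h (x ∘ i.succAbove) := by
    intro h x
    rw [hPdef]
    rw [ContinuousLinearMap.sum_apply, Finset.sum_apply]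
    simp
  -- intertwining of powers
  have hA1app : ∀ (h : (Fin (n+1) → V) → ℝ) (y : Fin (n+1) → V),
      A₁ h y = t * (L (n+1)) h y := fun h y => rfl
  have hA2app : ∀ (h : (Fin (n+2) → V) → ℝ) (y : Fin (n+2) → V),
      A₂ h y = t * (L (n+2)) h y := fun h y => rfl
  have hpow : ∀ k : ℕ,
      (∀ (σ : Equiv.Perm (Fin (n+1))) (x : Fin (n+1) → V),
          ((A₁ ^ k) g) (x ∘ σ) = ((A₁ ^ k) g) x)
        ∧ (A₂ ^ k) (P g) = P ((A₁ ^ k) g) := by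
    intro k
    induction k with
    | zero => exact ⟨fun σ x => hg σ x, by simp⟩
    | succ k ih =>
      obtain ⟨ih1, ih2⟩ := ih
      have hinv : (∀ (σ : Equiv.Perm (Fin (n+1))) (x : Fin (n+1) → V),
          ((A₁ ^ (k+1)) g) (x ∘ σ) = ((A₁ ^ (k+1)) g) x) := by
        intro σ x
        have hfix : (fun y => ((A₁ ^ k) g) (y ∘ σ)) = (A₁ ^ k) g :=
          funext fun y => ih1 σ y
        have hp := congrFun (hperm (n+1) (by omega) σ ((A₁ ^ k) g)) x
        rw [hfix] at hp
        calc ((A₁ ^ (k+1)) g) (x ∘ σ)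
            = t * (L (n+1) ((A₁ ^ k) g)) (x ∘ σ) := by
              rw [pow_succ', ContinuousLinearMap.mul_apply]; exact hA1app _ _
          _ = t * (L (n+1) ((A₁ ^ k) g)) x := by rw [← hp]
          _ = ((A₁ ^ (k+1)) g) x := by
              rw [pow_succ', ContinuousLinearMap.mul_apply]; exact (hA1app _ _).symm
      refine ⟨hinv, ?_⟩
      have hPh : P ((A₁ ^ k) g)
          = fun x => ∑ i : Fin (n+2), ((A₁ ^ k) g) (x ∘ i.succAbove) :=
        funext fun x => hP _ x
      have hi := hint n ((A₁ ^ k) g) ih1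
      funext x
      calc ((A₂ ^ (k+1)) (P g)) x
          = t * (L (n+2) (P ((A₁ ^ k) g))) x := by
            rw [pow_succ', ContinuousLinearMap.mul_apply, ih2]; exact hA2app _ _
        _ = t * ∑ i : Fin (n+2), (L (n+1) ((A₁ ^ k) g)) (x ∘ i.succAbove) := by
            rw [hPh, hi]
        _ = ∑ i : Fin (n+2), t * (L (n+1) ((A₁ ^ k) g)) (x ∘ i.succAbove) := by
            rw [Finset.mul_sum]
        _ = P ((A₁ ^ (k+1)) g) x := by
            rw [hP]
            refine Finset.sum_congr rfl fun i _ => ?_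
            rw [pow_succ', ContinuousLinearMap.mul_apply]; exact (hA1app _ _).symm
  -- intertwining of exponentials
  have hexpP : NormedSpace.exp A₂ (P g) = P (NormedSpace.exp A₁ g) := by
    calc NormedSpace.exp A₂ (P g)
        = ∑' (k : ℕ), ((k : ℕ).factorial : ℝ)⁻¹ • ((A₂ ^ k) (P g)) := exp_apply_tsum _ _
      _ = ∑' (k : ℕ), P (((k : ℕ).factorial : ℝ)⁻¹ • ((A₁ ^ k) g)) := by
          exact tsum_congr fun k => by rw [(hpow k).2, map_smul]
      _ = P (∑' (k : ℕ), ((k : ℕ).factorial : ℝ)⁻¹ • ((A₁ ^ k) g)) :=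
          (P.map_tsum (exp_series_apply_summable A₁ g)).symm
      _ = P (NormedSpace.exp A₁ g) := by rw [← exp_apply_tsum]
  -- the permutations τ i with τ i ∘ castSucc = succAbove i
  set τ : Fin (n+2) → Equiv.Perm (Fin (n+2)) :=
    fun i => (finSuccEquiv' (Fin.last (n+1))).trans (finSuccEquiv' i).symm with hτdef
  have hτ : ∀ (i : Fin (n+2)) (x : Fin (n+2) → V),
      Fin.init (x ∘ τ i) = x ∘ i.succAbove := by
    intro i x
    funext j
    show x (τ i (Fin.castSucc j)) = x (i.succAbove j)
    congr 1
    show (finSuccEquiv' i).symm (finSuccEquiv' (Fin.last (n+1)) (Fin.castSucc j))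
        = i.succAbove j
    rw [← Fin.succAbove_last, finSuccEquiv'_succAbove, finSuccEquiv'_symm_some]
  -- reindexing sums against μ (n+2)
  have hre : ∀ (σ : Equiv.Perm (Fin (n+2))) (F : (Fin (n+2) → V) → ℝ),
      ∑ x : Fin (n+2) → V, μ (n+2) x * F (x ∘ σ)
        = ∑ x : Fin (n+2) → V, μ (n+2) x * F x := by
    intro σ F
    rw [← sum_precomp σ⁻¹ (fun z => μ (n+2) z * F (z ∘ σ))]
    refine Finset.sum_congr rfl fun x _ => ?_
    have h1 : μ (n+2) (x ∘ ⇑σ⁻¹) = μ (n+2) x := hμperm (n+2) σ⁻¹ x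
    have h2 : (x ∘ ⇑σ⁻¹) ∘ ⇑σ = x := funext fun j => by simp [Function.comp]
    rw [h1, h2]
  -- the exponential of g is relevant on both sides
  set E₁ : (Fin (n+1) → V) → ℝ := NormedSpace.exp A₁ g with hE₁
  set E₂ : (Fin (n+2) → V) → ℝ := NormedSpace.exp A₂ πg with hE₂
  have hLHS : (fun x => expOp t (L (n + 2)) (fun y => g (Fin.init y)) x) = E₂ := rfl
  have hRHS : (fun x => expOp t (L (n + 1)) g x) = E₁ := rfl
  -- Claim 1 : ∑ μ₂ * exp(t L₂)(P g) = (n+2) * LHS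
  have hEP : ∀ x : Fin (n+2) → V,
      NormedSpace.exp A₂ (P g) x = ∑ i : Fin (n+2), E₂ (x ∘ τ i) := by
    intro x
    have h1 : P g = ∑ i : Fin (n+2), (fun y => πg (y ∘ τ i)) := by
      funext y
      rw [hP, Finset.sum_apply]
      refine Finset.sum_congr rfl fun i _ => ?_
      show g (y ∘ i.succAbove) = g (Fin.init (y ∘ τ i))
      rw [hτ]
    rw [h1, map_sum, Finset.sum_apply]
    exact Finset.sum_congr rfl fun i _ => hcomm (n+2) (by omega) (τ i) πg x
  have claim1 : ∑ x : Fin (n+2) → V, μ (n+2) x * NormedSpace.exp A₂ (P g) x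
      = ((n : ℝ) + 2) * ∑ x : Fin (n+2) → V, μ (n+2) x * E₂ x := by
    calc ∑ x : Fin (n+2) → V, μ (n+2) x * NormedSpace.exp A₂ (P g) x
        = ∑ x : Fin (n+2) → V, ∑ i : Fin (n+2), μ (n+2) x * E₂ (x ∘ τ i) := by
          refine Finset.sum_congr rfl fun x _ => ?_
          rw [hEP x, Finset.mul_sum]
      _ = ∑ i : Fin (n+2), ∑ x : Fin (n+2) → V, μ (n+2) x * E₂ (x ∘ τ i) :=
          Finset.sum_comm
      _ = ∑ i : Fin (n+2), ∑ x : Fin (n+2) → V, μ (n+2) x * E₂ x :=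
          Finset.sum_congr rfl fun i _ => hre (τ i) E₂
      _ = ((n : ℝ) + 2) * ∑ x : Fin (n+2) → V, μ (n+2) x * E₂ x := by
          rw [Finset.sum_const, Finset.card_univ, Fintype.card_fin, nsmul_eq_mul]
          push_cast
          ring
  -- Claim 2 : ∑ μ₂ * exp(t L₂)(P g) = (n+2) * RHS
  have hsnoc : ∀ (F : (Fin (n+2) → V) → ℝ),
      ∑ x : Fin (n+2) → V, F x
        = ∑ p : (Fin (n+1) → V) × V, F (Fin.snoc p.1 p.2) := by
    intro F
    have hb : Function.Bijective
        (fun p : (Fin (n+1) → V) × V => (Fin.snoc p.1 p.2 : Fin (n+2) → V)) := by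
      apply Function.bijective_iff_has_inverse.mpr
      refine ⟨fun x => (Fin.init x, x (Fin.last (n+1))), fun p => ?_, fun x => ?_⟩
      · simp
      · simp
    exact (Fintype.sum_bijective _ hb _ _ (fun p => rfl)).symm
  have hmarg : ∑ x : Fin (n+2) → V, μ (n+2) x * E₁ (Fin.init x)
      = ∑ x : Fin (n+1) → V, μ (n+1) x * E₁ x := by
    rw [hsnoc (fun x => μ (n+2) x * E₁ (Fin.init x))]
    rw [Fintype.sum_prod_type]
    refine Finset.sum_congr rfl fun x' _ => ?_
    have : ∀ y : V, μ (n+2) (Fin.snoc x' y) * E₁ (Fin.init (Fin.snoc x' y : Fin (n+2) → V))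
        = μ (n+2) (Fin.snoc x' y) * E₁ x' := by
      intro y; rw [Fin.init_snoc]
    rw [Finset.sum_congr rfl fun y _ => this y, ← Finset.sum_mul, hμcons (n+1) x']
  have claim2 : ∑ x : Fin (n+2) → V, μ (n+2) x * NormedSpace.exp A₂ (P g) x
      = ((n : ℝ) + 2) * ∑ x : Fin (n+1) → V, μ (n+1) x * E₁ x := by
    calc ∑ x : Fin (n+2) → V, μ (n+2) x * NormedSpace.exp A₂ (P g) x
        = ∑ x : Fin (n+2) → V, ∑ i : Fin (n+2), μ (n+2) x * E₁ (x ∘ i.succAbove) := by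
          refine Finset.sum_congr rfl fun x _ => ?_
          rw [hexpP, hP, Finset.mul_sum]
      _ = ∑ i : Fin (n+2), ∑ x : Fin (n+2) → V, μ (n+2) x * E₁ (x ∘ i.succAbove) :=
          Finset.sum_comm
      _ = ∑ i : Fin (n+2), ∑ x : Fin (n+2) → V, μ (n+2) x * E₁ (Fin.init x) := by
          refine Finset.sum_congr rfl fun i _ => ?_
          have h1 : ∀ x : Fin (n+2) → V,
              μ (n+2) x * E₁ (x ∘ i.succAbove)
                = μ (n+2) x * E₁ (Fin.init (x ∘ τ i)) := by
            intro x; rw [hτ]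
          rw [Finset.sum_congr rfl fun x _ => h1 x]
          exact hre (τ i) (fun y => E₁ (Fin.init y))
      _ = ∑ i : Fin (n+2), ∑ x : Fin (n+1) → V, μ (n+1) x * E₁ x :=
          Finset.sum_congr rfl fun i _ => hmarg
      _ = ((n : ℝ) + 2) * ∑ x : Fin (n+1) → V, μ (n+1) x * E₁ x := by
          rw [Finset.sum_const, Finset.card_univ, Fintype.card_fin, nsmul_eq_mul]
          push_cast
          ring
  -- conclude
  have hne : ((n : ℝ) + 2) ≠ 0 := by positivity
  have := claim1.symm.trans claim2
  have hfin : ∑ x : Fin (n+2) → V, μ (n+2) x * E₂ x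
      = ∑ x : Fin (n+1) → V, μ (n+1) x * E₁ x := by
    exact mul_left_cancel₀ hne this
  exact hfin
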